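/- For every integer k ≥ 2, there are infinitely many (pairwise non-isomorphic) well-totally-dominated graphs with total domination number k. -/

import Mathlib

def IsTDS {V : Type*} (G : SimpleGraph V) (S : Set V) : Prop :=
  ∀ v : V, ∃ u ∈ S, G.Adj v u

def IsMinTDS {V : Type*} (G : SimpleGraph V) (S : Set V) : Prop :=
  IsTDS G S ∧ ∀ T ⊂ S, ¬ IsTDS G T

/-- For every k ≥ 2 there are infinitely many (arbitrarily large, hence pairwise
non-isomorphic) well-totally-dominated graphs with total domination number k. -/
theorem stmt_3 (k : ℕ) (hk : 2 ≤ k) (n : ℕ) :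
    ∃ m ≥ n, ∃ G : SimpleGraph (Fin m),
      (∀ v, ∃ u, G.Adj v u) ∧
      (∃ S : Set (Fin m), IsMinTDS G S ∧ S.ncard = k) ∧
      (∀ S : Set (Fin m), IsMinTDS G S → S.ncard = k) := by
  refine ⟨max n (2 * k), le_max_left _ _, ?_⟩
  set m := max n (2 * k) with hm
  have hm2 : 2 * k ≤ m := le_max_right _ _
  have hkm : k ≤ m := by omega
  let G : SimpleGraph (Fin m) :=
    { Adj := fun u v =>
        (u.val < k ∧ v.val < k ∧ u ≠ v) ∨
        (u.val < k ∧ k ≤ v.val ∧ v.val % k = u.val) ∨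
        (v.val < k ∧ k ≤ u.val ∧ u.val % k = v.val)
      symm := by
        refine ⟨fun u v h => ?_⟩
        rcases h with ⟨a, b, c⟩ | ⟨a, b, c⟩ | ⟨a, b, c⟩
        · exact Or.inl ⟨b, a, c.symm⟩
        · exact Or.inr (Or.inr ⟨a, b, c⟩)
        · exact Or.inr (Or.inl ⟨a, b, c⟩)
      loopless := by
        refine ⟨fun v h => ?_⟩
        rcases h with ⟨a, b, c⟩ | ⟨a, b, c⟩ | ⟨a, b, c⟩
        · exact c rfl
        · omega
        · omega }
  -- the set of "centers"
  set C : Set (Fin m) := {v | v.val < k} with hC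
  -- C is a TDS
  have hCT : IsTDS G C := by
    intro v
    by_cases hv : v.val < k
    · by_cases hv0 : v.val = 0
      · refine ⟨⟨1, by omega⟩, by simp [hC]; omega, ?_⟩
        refine Or.inl ⟨hv, by simp; omega, ?_⟩
        intro h; rw [h] at hv0; simp at hv0
      · refine ⟨⟨0, by omega⟩, by simp [hC]; omega, ?_⟩
        refine Or.inl ⟨hv, by simp; omega, ?_⟩
        intro h; rw [h] at hv0; simp at hv0
    · have hmod : v.val % k < k := Nat.mod_lt _ (by omega)
      refine ⟨⟨v.val % k, by omega⟩, by simpa [hC] using hmod, ?_⟩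
      exact Or.inr (Or.inr ⟨by simpa using hmod, by omega, rfl⟩)
  -- every TDS contains C
  have hsubset : ∀ S : Set (Fin m), IsTDS G S → C ⊆ S := by
    intro S hS v hvC
    have hv : v.val < k := hvC
    obtain ⟨u, huS, hadj⟩ := hS ⟨k + v.val, by omega⟩
    have huv : u = v := by
      rcases hadj with ⟨a, b, c⟩ | ⟨a, b, c⟩ | ⟨a, b, c⟩
      · simp at a
      · simp at a
      · apply Fin.ext
        simp only [Fin.val_mk] at c
        rw [Nat.add_mod_left, Nat.mod_eq_of_lt hv] at c
        exact c.symm ▸ rfl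
    rwa [huv] at huS
  -- C is a minimal TDS
  have hCmin : IsMinTDS G C := by
    refine ⟨hCT, ?_⟩
    intro T hT hTDS
    exact hT.2 (hsubset T hTDS)
  -- every minimal TDS equals C
  have huniq : ∀ S : Set (Fin m), IsMinTDS G S → S = C := by
    intro S hS
    have h1 : C ⊆ S := hsubset S hS.1
    rcases ssubset_or_eq_of_subset h1 with h2 | h2
    · exact absurd hCT (hS.2 C h2)
    · exact h2.symm
  -- cardinality of C
  have hcard : C.ncard = k := by
    have hCeq : C = Set.range (Fin.castLE hkm) := by
      ext v
      simp only [hC, Set.mem_setOf_eq, Set.mem_range]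
      constructor
      · intro h
        exact ⟨⟨v.val, h⟩, Fin.ext rfl⟩
      · rintro ⟨i, rfl⟩
        exact i.isLt
    rw [hCeq, ← Set.image_univ,
      Set.ncard_image_of_injective _ (Fin.castLE_injective hkm),
      Set.ncard_univ, Nat.card_eq_fintype_card, Fintype.card_fin]
  refine ⟨G, ?_, ⟨C, hCmin, hcard⟩, ?_⟩
  · intro v
    obtain ⟨u, _, h⟩ := hCT v
    exact ⟨u, h⟩
  · intro S hS
    rw [huniq S hS, hcard]
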